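/- Let u be a bounded measurable 2π-periodic function and let μ_u be the probability measure on [0,2π] with density e^{−u(θ)} / ∫₀^{2π} e^{−u}. Define DΓ[u](v)(θ) = ∫ v dμ_u · ∫ K̂(θ − θ') dμ_u(θ') − ∫ K̂(θ − θ') v(θ') dμ_u(θ'), and let φ_n(θ) = (1/√π) cos(2nθ). Then for all n, m ≥ 1, the matrix entry a_{nm}(u) = ∫₀^{2π} DΓ[u](φ_n)(θ) φ_m(θ) dθ satisfies a_{nm}(u) = k_m [ ∫ cos(2nθ) dμ_u · ∫ cos(2mθ) dμ_u − ∫ cos(2nθ) cos(2mθ) dμ_u ], and in particular |a_{nm}(u)| ≤ |k_m|. -/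

import Mathlib

open MeasureTheory Filter Topology Real intervalIntegral

/-- `Γ[u](θ) = (∫₀^{2π} e^{-u})⁻¹ ∫₀^{2π} K̂(θ - θ') e^{-u(θ')} dθ'`. -/
noncomputable def Gam (K u : ℝ → ℝ) (θ : ℝ) : ℝ :=
  (∫ t in (0:ℝ)..(2 * π), Real.exp (-(u t)))⁻¹ *
    ∫ t in (0:ℝ)..(2 * π), K (θ - t) * Real.exp (-(u t))

/-- Membership in `X = {u ∈ L²([0,2π]) : u(θ) = u(θ+π) a.e., u(θ) = u(2π-θ) a.e.,
∫₀^{2π} u = 0}`, for a (2π-periodic) representative `u : ℝ → ℝ`. -/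
def MemX (u : ℝ → ℝ) : Prop :=
  MemLp u 2 (volume.restrict (Set.Ioc (0:ℝ) (2 * π))) ∧
  (∀ᵐ θ : ℝ, u (θ + π) = u θ) ∧
  (∀ᵐ θ : ℝ, u (2 * π - θ) = u θ) ∧
  (∫ θ in (0:ℝ)..(2 * π), u θ) = 0

/-- `‖K̂‖_∞ = sup_{θ ∈ [0,2π]} |K̂(θ)|`. -/
noncomputable def supNorm (K : ℝ → ℝ) : ℝ := ⨆ θ : Set.Icc (0:ℝ) (2 * π), |K θ|

/-- The mean `∫₀^{2π} f dμ_u` of `f` against the probability measure `μ_u` with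
density `e^{-u}/∫₀^{2π} e^{-u}`. -/
noncomputable def mAvg (u f : ℝ → ℝ) : ℝ :=
  (∫ t in (0:ℝ)..(2 * π), Real.exp (-(u t)))⁻¹ *
    ∫ t in (0:ℝ)..(2 * π), f t * Real.exp (-(u t))

/-- The Gâteaux derivative of `Γ` at `u`:
`DΓ[u](v)(θ) = ∫ v dμ_u ∫ K̂(θ-θ') dμ_u - ∫ K̂(θ-θ') v(θ') dμ_u(θ')`. -/
noncomputable def DGammaU (K u v : ℝ → ℝ) (θ : ℝ) : ℝ :=
  mAvg u v * mAvg u (fun t => K (θ - t)) - mAvg u (fun t => K (θ - t) * v t)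

/-- `φₙ(θ) = (1/√π) cos(2nθ)`. -/
noncomputable def phi (n : ℕ) (θ : ℝ) : ℝ := (1 / Real.sqrt π) * Real.cos (2 * n * θ)

lemma intCosZ (d : ℤ) : (∫ x in (0:ℝ)..(2*π), Real.cos (d*x)) = if d = 0 then 2*π else 0 := by
  rcases eq_or_ne d 0 with h | h
  · simp [h]
  · rw [if_neg h]
    have := intervalIntegral.integral_comp_mul_left (a := (0:ℝ)) (b := 2*π)
      (f := Real.cos) (c := (d:ℝ)) (by exact_mod_cast h)
    rw [this, integral_cos]
    have h1 : Real.sin ((d:ℝ)*(2*π)) = 0 := by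
      have := Real.sin_int_mul_pi (2*d)
      rw [show ((2*d : ℤ):ℝ) * π = (d:ℝ)*(2*π) by push_cast; ring] at this
      exact this
    simp [h1]

lemma intSinZ (d : ℤ) : (∫ x in (0:ℝ)..(2*π), Real.sin (d*x)) = 0 := by
  rcases eq_or_ne d 0 with h | h
  · simp [h]
  · have := intervalIntegral.integral_comp_mul_left (a := (0:ℝ)) (b := 2*π)
      (f := Real.sin) (c := (d:ℝ)) (by exact_mod_cast h)
    rw [this, integral_sin]
    have h1 : Real.cos ((d:ℝ)*(2*π)) = 1 := Real.cos_int_mul_two_pi d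
    simp [h1]

lemma orthoCC (a b : ℕ) (ha : 1 ≤ a) (hb : 1 ≤ b) :
    (∫ x in (0:ℝ)..(2*π), Real.cos (2*a*x) * Real.cos (2*b*x)) =
      if a = b then π else 0 := by
  have key : ∀ x : ℝ, Real.cos (2*a*x) * Real.cos (2*b*x) =
      (Real.cos (((2*(a:ℤ)-2*b : ℤ):ℝ)*x) + Real.cos (((2*(a:ℤ)+2*b : ℤ):ℝ)*x)) / 2 := by
    intro x
    have := Real.two_mul_cos_mul_cos (2*a*x) (2*b*x)
    push_cast
    rw [show ((2:ℝ)*↑a - 2*↑b) * x = 2*↑a*x - 2*↑b*x by ring,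
        show ((2:ℝ)*↑a + 2*↑b) * x = 2*↑a*x + 2*↑b*x by ring]
    linarith
  simp_rw [key]
  rw [intervalIntegral.integral_div, intervalIntegral.integral_add
    (by apply Continuous.intervalIntegrable; fun_prop)
    (by apply Continuous.intervalIntegrable; fun_prop),
    intCosZ, intCosZ]
  have hne : ¬ (2*(a:ℤ)+2*b = 0) := by omega
  rcases eq_or_ne a b with h | h
  · rw [if_pos h, if_pos (by omega), if_neg hne]; ring
  · rw [if_neg h, if_neg (by omega : ¬ (2*(a:ℤ)-2*b = 0)), if_neg hne]; ring

lemma orthoSC (a b : ℕ) :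
    (∫ x in (0:ℝ)..(2*π), Real.sin (2*a*x) * Real.cos (2*b*x)) = 0 := by
  have key : ∀ x : ℝ, Real.sin (2*a*x) * Real.cos (2*b*x) =
      (Real.sin (((2*(a:ℤ)-2*b : ℤ):ℝ)*x) + Real.sin (((2*(a:ℤ)+2*b : ℤ):ℝ)*x)) / 2 := by
    intro x
    have := Real.two_mul_sin_mul_cos (2*a*x) (2*b*x)
    push_cast
    rw [show ((2:ℝ)*↑a - 2*↑b) * x = 2*↑a*x - 2*↑b*x by ring,
        show ((2:ℝ)*↑a + 2*↑b) * x = 2*↑a*x + 2*↑b*x by ring]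
    linarith
  simp_rw [key]
  rw [intervalIntegral.integral_div, intervalIntegral.integral_add
    (by apply Continuous.intervalIntegrable; fun_prop)
    (by apply Continuous.intervalIntegrable; fun_prop),
    intSinZ, intSinZ]
  ring

lemma summable_shift {k : ℕ → ℝ} (hsum : Summable fun m => |k m|) :
    Summable fun m => |k (m + 1)| := by
  exact (summable_nat_add_iff 1).2 hsum

lemma K_cont {K : ℝ → ℝ} {k : ℕ → ℝ} (hsum : Summable fun m => |k m|)
    (hK : ∀ θ : ℝ, HasSum (fun m : ℕ => k (m + 1) * Real.cos (2 * (m + 1) * θ)) (K θ)) :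
    Continuous K := by
  have hKeq : K = fun θ => ∑' m : ℕ, k (m + 1) * Real.cos (2 * (m + 1) * θ) :=
    funext fun θ => ((hK θ).tsum_eq).symm
  rw [hKeq]
  apply continuous_tsum (fun i => by fun_prop) (summable_shift hsum)
  intro n x
  rw [Real.norm_eq_abs, abs_mul]
  calc |k (n+1)| * |Real.cos (2 * (n+1) * x)| ≤ |k (n+1)| * 1 :=
        mul_le_mul_of_nonneg_left (Real.abs_cos_le_one _) (abs_nonneg _)
    _ = |k (n+1)| := mul_one _

lemma K_bound {K : ℝ → ℝ} {k : ℕ → ℝ} (hsum : Summable fun m => |k m|)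
    (hK : ∀ θ : ℝ, HasSum (fun m : ℕ => k (m + 1) * Real.cos (2 * (m + 1) * θ)) (K θ)) :
    ∀ θ, |K θ| ≤ ∑' m : ℕ, |k (m + 1)| := by
  intro θ
  have h1 := hK θ
  rw [← h1.tsum_eq]
  have hb : ∀ m : ℕ, |k (m + 1)| * |Real.cos (2 * (m + 1) * θ)| ≤ |k (m + 1)| := by
    intro m
    calc |k (m+1)| * |Real.cos (2 * (m+1) * θ)| ≤ |k (m+1)| * 1 :=
          mul_le_mul_of_nonneg_left (Real.abs_cos_le_one _) (abs_nonneg _)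
      _ = |k (m+1)| := mul_one _
  calc |∑' m : ℕ, k (m + 1) * Real.cos (2 * (m + 1) * θ)|
      ≤ ∑' m : ℕ, |k (m + 1)| * |Real.cos (2 * (m + 1) * θ)| := by
        simpa using norm_tsum_le_tsum_norm (f := fun m : ℕ => k (m + 1) * Real.cos (2 * (m + 1) * θ)) (by simpa [abs_mul] using (h1.summable.abs))
    _ ≤ ∑' m : ℕ, |k (m + 1)| :=
        Summable.tsum_le_tsum hb (by simpa [abs_mul] using h1.summable.abs) (summable_shift hsum)

lemma key_int {K : ℝ → ℝ} {k : ℕ → ℝ} (hsum : Summable fun m => |k m|)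
    (hK : ∀ θ : ℝ, HasSum (fun m : ℕ => k (m + 1) * Real.cos (2 * (m + 1) * θ)) (K θ))
    (m : ℕ) (hm : 1 ≤ m) (t : ℝ) :
    (∫ θ in (0:ℝ)..(2*π), K (θ - t) * Real.cos (2*m*θ)) = π * k m * Real.cos (2*m*t) := by
  set F : ℕ → C(ℝ, ℝ) := fun j =>
    ⟨fun θ => k (j+1) * Real.cos (2 * (j+1) * (θ - t)) * Real.cos (2*m*θ), by fun_prop⟩ with hF
  have hsumF : Summable fun j => ‖(F j).restrict
      (⟨Set.uIcc (0:ℝ) (2*π), isCompact_uIcc⟩ : TopologicalSpace.Compacts ℝ)‖ := by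
    apply Summable.of_nonneg_of_le (fun j => norm_nonneg _) (fun j => ?_) (summable_shift hsum)
    apply (ContinuousMap.norm_le _ (abs_nonneg _)).2
    rintro ⟨x, hx⟩
    simp only [ContinuousMap.restrict_apply, hF, ContinuousMap.coe_mk, Real.norm_eq_abs]
    rw [abs_mul, abs_mul]
    calc |k (j+1)| * |Real.cos (2 * (j+1) * (x - t))| * |Real.cos (2*m*x)|
        ≤ |k (j+1)| * 1 * 1 := by
          apply mul_le_mul (mul_le_mul_of_nonneg_left (Real.abs_cos_le_one _) (abs_nonneg _))
            (Real.abs_cos_le_one _) (abs_nonneg _)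
          positivity
      _ = |k (j+1)| := by ring
  have hs := hasSum_intervalIntegral_of_summable_norm (a := 0) (b := 2*π) hsumF
  have htsum : ∀ x : ℝ, (∑' j : ℕ, F j x) = K (x - t) * Real.cos (2*m*x) := by
    intro x
    exact ((hK (x - t)).mul_right (Real.cos (2*m*x))).tsum_eq
  simp_rw [htsum] at hs
  -- compute each term's integral
  have hterm : ∀ j : ℕ, (∫ x in (0:ℝ)..(2*π), F j x) =
      if j + 1 = m then π * k m * Real.cos (2*m*t) else 0 := by
    intro j
    have hexp : ∀ x : ℝ, F j x =
        (k (j+1) * Real.cos (2 * (j+1) * t)) * (Real.cos (2*(j+1)*x) * Real.cos (2*m*x)) +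
        (k (j+1) * Real.sin (2 * (j+1) * t)) * (Real.sin (2*(j+1)*x) * Real.cos (2*m*x)) := by
      intro x
      simp only [hF, ContinuousMap.coe_mk]
      rw [show (2 : ℝ) * (j+1) * (x - t) = 2*(j+1)*x - 2*(j+1)*t by ring, Real.cos_sub]
      ring
    simp_rw [hexp]
    rw [intervalIntegral.integral_add
      (by apply Continuous.intervalIntegrable; fun_prop)
      (by apply Continuous.intervalIntegrable; fun_prop),
      intervalIntegral.integral_const_mul, intervalIntegral.integral_const_mul]
    have h1 : (∫ x in (0:ℝ)..(2*π), Real.cos (2*(j+1)*x) * Real.cos (2*m*x)) =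
        if j + 1 = m then π else 0 := by
      have := orthoCC (j+1) m (by omega) hm
      push_cast at this ⊢
      exact this
    have h2 : (∫ x in (0:ℝ)..(2*π), Real.sin (2*(j+1)*x) * Real.cos (2*m*x)) = 0 := by
      have := orthoSC (j+1) m
      push_cast at this ⊢
      exact this
    rw [h1, h2, mul_zero, add_zero]
    rcases eq_or_ne (j+1) m with h | h
    · subst h; rw [if_pos rfl, if_pos rfl]; push_cast; ring_nf
    · rw [if_neg h, if_neg h, mul_zero]
  simp_rw [hterm] at hs
  have hs2 : HasSum (fun j : ℕ => if j + 1 = m then π * k m * Real.cos (2*m*t) else 0)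
      (π * k m * Real.cos (2*m*t)) := by
    have : (fun j : ℕ => if j + 1 = m then π * k m * Real.cos (2*m*t) else 0) =
        (fun j : ℕ => if j = m - 1 then π * k m * Real.cos (2*m*t) else 0) := by
      funext j
      congr 1
      simp only [eq_iff_iff]
      omega
    rw [this]
    exact hasSum_ite_eq (m-1) _
  exact hs.unique hs2

lemma cov_bound {α : Type*} [MeasurableSpace α] (μ : Measure α) [IsFiniteMeasure μ]
    {w X Y : α → ℝ} (hw : Measurable w) (hX : Measurable X) (hY : Measurable Y)
    (hwpos : ∀ t, 0 < w t) {Mw : ℝ} (hwbd : ∀ t, w t ≤ Mw)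
    (hX1 : ∀ t, |X t| ≤ 1) (hY1 : ∀ t, |Y t| ≤ 1)
    (hC : 0 < ∫ t, w t ∂μ) :
    |(∫ t, w t ∂μ)⁻¹ * (∫ t, X t * w t ∂μ) * ((∫ t, w t ∂μ)⁻¹ * ∫ t, Y t * w t ∂μ) -
      (∫ t, w t ∂μ)⁻¹ * ∫ t, X t * Y t * w t ∂μ| ≤ 1 := by
  have key : ∀ (f : α → ℝ), Measurable f → ∀ B : ℝ, (∀ t, |f t| ≤ B) → Integrable f μ :=
    fun f hf B hB => (integrable_const B).mono' hf.aestronglyMeasurable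
      (ae_of_all _ fun t => by simpa [Real.norm_eq_abs] using hB t)
  set C := ∫ t, w t ∂μ with hCdef
  set a := C⁻¹ * ∫ t, X t * w t ∂μ with ha
  set b := C⁻¹ * ∫ t, Y t * w t ∂μ with hb
  have hCne : C ≠ 0 := ne_of_gt hC
  have hwabs : ∀ t, |w t| ≤ Mw := fun t => by
    rw [abs_of_pos (hwpos t)]; exact hwbd t
  have hXw : ∀ t, |X t * w t| ≤ Mw := fun t => by
    rw [abs_mul, abs_of_pos (hwpos t)]
    calc |X t| * w t ≤ 1 * w t := mul_le_mul_of_nonneg_right (hX1 t) (hwpos t).le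
      _ = w t := one_mul _
      _ ≤ Mw := hwbd t
  have hYw : ∀ t, |Y t * w t| ≤ Mw := fun t => by
    rw [abs_mul, abs_of_pos (hwpos t)]
    calc |Y t| * w t ≤ 1 * w t := mul_le_mul_of_nonneg_right (hY1 t) (hwpos t).le
      _ = w t := one_mul _
      _ ≤ Mw := hwbd t
  have hXYw : ∀ t, |X t * Y t * w t| ≤ Mw := fun t => by
    rw [abs_mul, abs_mul, abs_of_pos (hwpos t)]
    calc |X t| * |Y t| * w t ≤ 1 * w t :=
          mul_le_mul_of_nonneg_right (mul_le_one₀ (hX1 t) (abs_nonneg _) (hY1 t)) (hwpos t).le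
      _ = w t := one_mul _
      _ ≤ Mw := hwbd t
  have iw : Integrable w μ := key w hw Mw hwabs
  have iXw : Integrable (fun t => X t * w t) μ := key _ (hX.mul hw) Mw hXw
  have iYw : Integrable (fun t => Y t * w t) μ := key _ (hY.mul hw) Mw hYw
  have iXYw : Integrable (fun t => X t * Y t * w t) μ := key _ ((hX.mul hY).mul hw) Mw hXYw
  have isqX : Integrable (fun t => (X t - a)^2 * w t) μ := by
    refine key _ (((hX.sub measurable_const).pow measurable_const).mul hw) ((1+|a|)^2 * Mw) ?_
    intro t
    rw [abs_mul, abs_pow]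
    apply mul_le_mul _ (hwabs t) (abs_nonneg _) (by positivity)
    apply pow_le_pow_left₀ (abs_nonneg _)
    calc |X t - a| ≤ |X t| + |a| := abs_sub _ _
      _ ≤ 1 + |a| := add_le_add (hX1 t) le_rfl
  have isqY : Integrable (fun t => (Y t - b)^2 * w t) μ := by
    refine key _ (((hY.sub measurable_const).pow measurable_const).mul hw) ((1+|b|)^2 * Mw) ?_
    intro t
    rw [abs_mul, abs_pow]
    apply mul_le_mul _ (hwabs t) (abs_nonneg _) (by positivity)
    apply pow_le_pow_left₀ (abs_nonneg _)
    calc |Y t - b| ≤ |Y t| + |b| := abs_sub _ _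
      _ ≤ 1 + |b| := add_le_add (hY1 t) le_rfl
  have icov : Integrable (fun t => (X t - a) * (Y t - b) * w t) μ := by
    refine key _ (((hX.sub measurable_const).mul (hY.sub measurable_const)).mul hw)
      ((1+|a|) * (1+|b|) * Mw) ?_
    intro t
    rw [abs_mul, abs_mul]
    apply mul_le_mul _ (hwabs t) (abs_nonneg _) (by positivity)
    apply mul_le_mul _ _ (abs_nonneg _) (by positivity)
    · calc |X t - a| ≤ |X t| + |a| := abs_sub _ _
        _ ≤ 1 + |a| := add_le_add (hX1 t) le_rfl
    · calc |Y t - b| ≤ |Y t| + |b| := abs_sub _ _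
        _ ≤ 1 + |b| := add_le_add (hY1 t) le_rfl
  -- mean identities
  have hXmean : (∫ t, X t * w t ∂μ) = a * C := by rw [ha]; field_simp
  have hYmean : (∫ t, Y t * w t ∂μ) = b * C := by rw [hb]; field_simp
  -- expansion of covariance integral
  have hcov : (∫ t, (X t - a) * (Y t - b) * w t ∂μ) =
      (∫ t, X t * Y t * w t ∂μ) - a * b * C := by
    have expand : (fun t => (X t - a) * (Y t - b) * w t) =
        (fun t => X t * Y t * w t - b * (X t * w t) - a * (Y t * w t) + (a*b) * w t) := by
      funext t; ring
    have i2 : Integrable (fun t => X t * Y t * w t - b * (X t * w t)) μ :=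
      iXYw.sub (iXw.const_mul b)
    have i1 : Integrable (fun t => X t * Y t * w t - b * (X t * w t) - a * (Y t * w t)) μ :=
      i2.sub (iYw.const_mul a)
    rw [expand, integral_add i1 (iw.const_mul (a*b)), integral_sub i2 (iYw.const_mul a),
      integral_sub iXYw (iXw.const_mul b), MeasureTheory.integral_const_mul, MeasureTheory.integral_const_mul,
      MeasureTheory.integral_const_mul, hXmean, hYmean]
    ring
  -- second moment bounds
  have hsqX : (∫ t, (X t - a)^2 * w t ∂μ) ≤ C := by
    have expand : (fun t => (X t - a)^2 * w t) =
        (fun t => X t * X t * w t - (2*a) * (X t * w t) + a^2 * w t) := by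
      funext t; ring
    have iXXw : Integrable (fun t => X t * X t * w t) μ := by
      refine key _ ((hX.mul hX).mul hw) Mw ?_
      intro t
      rw [abs_mul, abs_mul, abs_of_pos (hwpos t)]
      calc |X t| * |X t| * w t ≤ 1 * w t :=
            mul_le_mul_of_nonneg_right (mul_le_one₀ (hX1 t) (abs_nonneg _) (hX1 t)) (hwpos t).le
        _ = w t := one_mul _
        _ ≤ Mw := hwbd t
    have i2 : Integrable (fun t => X t * X t * w t - 2 * a * (X t * w t)) μ :=
      iXXw.sub (iXw.const_mul (2*a))
    rw [expand, integral_add i2 (iw.const_mul (a^2)),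
      integral_sub iXXw (iXw.const_mul (2*a)), MeasureTheory.integral_const_mul, MeasureTheory.integral_const_mul, hXmean]
    have hXX : (∫ t, X t * X t * w t ∂μ) ≤ C := by
      apply integral_mono iXXw iw
      intro t
      dsimp only
      have h1 : |X t * X t| ≤ 1 := by
        rw [abs_mul]; exact mul_le_one₀ (hX1 t) (abs_nonneg _) (hX1 t)
      nlinarith [hwpos t, abs_le.1 h1]
    nlinarith [sq_nonneg a, hC]
  have hsqY : (∫ t, (Y t - b)^2 * w t ∂μ) ≤ C := by
    have expand : (fun t => (Y t - b)^2 * w t) =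
        (fun t => Y t * Y t * w t - (2*b) * (Y t * w t) + b^2 * w t) := by
      funext t; ring
    have iYYw : Integrable (fun t => Y t * Y t * w t) μ := by
      refine key _ ((hY.mul hY).mul hw) Mw ?_
      intro t
      rw [abs_mul, abs_mul, abs_of_pos (hwpos t)]
      calc |Y t| * |Y t| * w t ≤ 1 * w t :=
            mul_le_mul_of_nonneg_right (mul_le_one₀ (hY1 t) (abs_nonneg _) (hY1 t)) (hwpos t).le
        _ = w t := one_mul _
        _ ≤ Mw := hwbd t
    have i2 : Integrable (fun t => Y t * Y t * w t - 2 * b * (Y t * w t)) μ :=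
      iYYw.sub (iYw.const_mul (2*b))
    rw [expand, integral_add i2 (iw.const_mul (b^2)),
      integral_sub iYYw (iYw.const_mul (2*b)), MeasureTheory.integral_const_mul, MeasureTheory.integral_const_mul, hYmean]
    have hYY : (∫ t, Y t * Y t * w t ∂μ) ≤ C := by
      apply integral_mono iYYw iw
      intro t
      dsimp only
      have h1 : |Y t * Y t| ≤ 1 := by
        rw [abs_mul]; exact mul_le_one₀ (hY1 t) (abs_nonneg _) (hY1 t)
      nlinarith [hwpos t, abs_le.1 h1]
    nlinarith [sq_nonneg b, hC]
  -- bound the covariance integral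
  have hcovbd : |∫ t, (X t - a) * (Y t - b) * w t ∂μ| ≤ C := by
    calc |∫ t, (X t - a) * (Y t - b) * w t ∂μ|
        ≤ ∫ t, |(X t - a) * (Y t - b) * w t| ∂μ := by
          simpa only [Real.norm_eq_abs] using
            MeasureTheory.norm_integral_le_integral_norm (μ := μ)
              (fun t => (X t - a) * (Y t - b) * w t)
      _ ≤ ∫ t, ((X t - a)^2 * w t + (Y t - b)^2 * w t) / 2 ∂μ := by
          apply integral_mono icov.abs ((isqX.add isqY).div_const 2)
          intro t
          simp only [Pi.add_apply]
          rw [abs_mul, abs_of_pos (hwpos t), abs_mul]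
          nlinarith [sq_nonneg (|X t - a| - |Y t - b|), hwpos t, sq_abs (X t - a),
            sq_abs (Y t - b), abs_nonneg (X t - a), abs_nonneg (Y t - b),
            mul_le_mul_of_nonneg_right (sq_nonneg (|X t - a| - |Y t - b|)) (hwpos t).le]
      _ = ((∫ t, (X t - a)^2 * w t ∂μ) + ∫ t, (Y t - b)^2 * w t ∂μ) / 2 := by
          rw [MeasureTheory.integral_div, integral_add isqX isqY]
      _ ≤ (C + C) / 2 := by linarith
      _ = C := by ring
  have : a * b - C⁻¹ * ∫ t, X t * Y t * w t ∂μ =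
      - (C⁻¹ * ∫ t, (X t - a) * (Y t - b) * w t ∂μ) := by
    rw [hcov]; field_simp; ring
  rw [this, abs_neg, abs_mul, abs_of_pos (inv_pos.2 hC)]
  calc C⁻¹ * |∫ t, (X t - a) * (Y t - b) * w t ∂μ| ≤ C⁻¹ * C :=
        mul_le_mul_of_nonneg_left hcovbd (inv_pos.2 hC).le
    _ = 1 := inv_mul_cancel₀ hCne

lemma intervalIntegrable_of_bdd {f : ℝ → ℝ} (hf : Measurable f) {B : ℝ}
    (hB : ∀ x, |f x| ≤ B) : IntervalIntegrable f volume 0 (2*π) :=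
  IntervalIntegrable.mono_fun' intervalIntegrable_const hf.aestronglyMeasurable
    (ae_of_all _ fun x => by simpa [Real.norm_eq_abs] using hB x)

/-- The matrix entries `a_{nm}(u) = ∫₀^{2π} DΓ[u](φₙ)(θ) φₘ(θ) dθ` satisfy
`a_{nm}(u) = kₘ (∫cos(2nθ)dμ_u ∫cos(2mθ)dμ_u - ∫cos(2nθ)cos(2mθ)dμ_u)`, and in
particular `|a_{nm}(u)| ≤ |kₘ|`. -/
theorem matrix_entries_bound (K : ℝ → ℝ) (k : ℕ → ℝ)
    (hsum : Summable fun m => |k m|)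
    (hK : ∀ θ : ℝ, HasSum (fun m : ℕ => k (m + 1) * Real.cos (2 * (m + 1) * θ)) (K θ))
    (u : ℝ → ℝ) (hu : Measurable u) (huper : Function.Periodic u (2 * π))
    (hubd : ∃ M : ℝ, ∀ θ, |u θ| ≤ M) :
    ∀ n m : ℕ, 1 ≤ n → 1 ≤ m →
      (∫ θ in (0:ℝ)..(2 * π), DGammaU K u (phi n) θ * phi m θ) =
        k m * (mAvg u (fun t => Real.cos (2 * n * t)) * mAvg u (fun t => Real.cos (2 * m * t)) -
          mAvg u (fun t => Real.cos (2 * n * t) * Real.cos (2 * m * t))) ∧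
      |∫ θ in (0:ℝ)..(2 * π), DGammaU K u (phi n) θ * phi m θ| ≤ |k m| := by
  intro n m hn hm
  obtain ⟨M, hM⟩ := hubd
  have h02 : (0:ℝ) ≤ 2*π := by positivity
  set ν : Measure ℝ := volume.restrict (Set.Ioc (0:ℝ) (2*π)) with hν
  haveI : IsFiniteMeasure ν := ⟨by
    rw [hν, Measure.restrict_apply_univ]; exact measure_Ioc_lt_top⟩
  -- basic functions and bounds
  have hemeas : Measurable (fun t => Real.exp (-(u t))) := Real.measurable_exp.comp hu.neg
  have hepos : ∀ t, (0:ℝ) < Real.exp (-(u t)) := fun t => Real.exp_pos _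
  have hebd : ∀ t, Real.exp (-(u t)) ≤ Real.exp M := fun t =>
    Real.exp_le_exp.2 (by linarith [(abs_le.1 (hM t)).1])
  have heabs : ∀ t, |Real.exp (-(u t))| ≤ Real.exp M := fun t => by
    rw [abs_of_pos (hepos t)]; exact hebd t
  have hKc : Continuous K := K_cont hsum hK
  have hKb : ∀ θ, |K θ| ≤ ∑' j : ℕ, |k (j+1)| := K_bound hsum hK
  set B : ℝ := ∑' j : ℕ, |k (j+1)| with hB
  have hB0 : 0 ≤ B := le_trans (abs_nonneg _) (hKb 0)
  have hsq : Real.sqrt π ≠ 0 := ne_of_gt (Real.sqrt_pos.2 Real.pi_pos)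
  set P : ℝ := 1 / Real.sqrt π with hP
  have hP0 : 0 ≤ P := by rw [hP]; positivity
  have hphic : ∀ j : ℕ, Continuous (phi j) := fun j => by unfold phi; fun_prop
  have hphibd : ∀ (j : ℕ) (t : ℝ), |phi j t| ≤ P := fun j t => by
    unfold phi
    rw [← hP, abs_mul, abs_of_nonneg hP0]
    calc P * |Real.cos (2*(j:ℝ)*t)| ≤ P * 1 :=
          mul_le_mul_of_nonneg_left (Real.abs_cos_le_one _) hP0
      _ = P := mul_one _
  -- positivity of the normalizing constant
  set C : ℝ := ∫ t in (0:ℝ)..(2*π), Real.exp (-(u t)) with hC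
  have hCpos : 0 < C := by
    have h1 : (∫ _t in (0:ℝ)..(2*π), Real.exp (-M)) ≤ C := by
      rw [hC]
      apply intervalIntegral.integral_mono_on h02 intervalIntegrable_const
        (intervalIntegrable_of_bdd hemeas heabs)
      intro x _
      exact Real.exp_le_exp.2 (by linarith [(abs_le.1 (hM x)).2])
    have h2 : (∫ _t in (0:ℝ)..(2*π), Real.exp (-M)) = (2*π) * Real.exp (-M) := by
      rw [intervalIntegral.integral_const, smul_eq_mul]; ring
    nlinarith [Real.exp_pos (-M), Real.pi_pos]
  have hCne : C ≠ 0 := ne_of_gt hCpos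
  -- abbreviations for the main moments
  set In : ℝ := ∫ t in (0:ℝ)..(2*π), Real.cos (2*(n:ℝ)*t) * Real.exp (-(u t)) with hIn
  set Im : ℝ := ∫ t in (0:ℝ)..(2*π), Real.cos (2*(m:ℝ)*t) * Real.exp (-(u t)) with hIm
  set Inm : ℝ := ∫ t in (0:ℝ)..(2*π),
    Real.cos (2*(n:ℝ)*t) * Real.cos (2*(m:ℝ)*t) * Real.exp (-(u t)) with hInm
  set A : ℝ := mAvg u (phi n) with hA
  have hAval : A = C⁻¹ * ((1/Real.sqrt π) * In) := by
    rw [hA]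
    unfold mAvg
    rw [← hC, hIn]
    congr 1
    rw [← intervalIntegral.integral_const_mul]
    apply intervalIntegral.integral_congr
    intro t _
    unfold phi
    ring
  -- integrability in t for fixed θ
  have hKtm : ∀ θ : ℝ, Measurable fun t => K (θ - t) := fun θ =>
    hKc.measurable.comp (measurable_const.sub measurable_id)
  have i1 : ∀ θ, IntervalIntegrable (fun t => K (θ - t) * Real.exp (-(u t))) volume 0 (2*π) :=
    fun θ => intervalIntegrable_of_bdd ((hKtm θ).mul hemeas) (B := B * Real.exp M) fun t => by
      rw [abs_mul]
      exact mul_le_mul (hKb _) (heabs t) (abs_nonneg _) hB0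
  have i2 : ∀ θ, IntervalIntegrable (fun t => K (θ - t) * phi n t * Real.exp (-(u t)))
      volume 0 (2*π) := fun θ =>
    intervalIntegrable_of_bdd (((hKtm θ).mul (hphic n).measurable).mul hemeas)
      (B := B * P * Real.exp M) fun t => by
      rw [abs_mul, abs_mul]
      exact mul_le_mul (mul_le_mul (hKb _) (hphibd n t) (abs_nonneg _) hB0) (heabs t)
        (abs_nonneg _) (by positivity)
  -- pointwise rewriting of the integrand
  have hinner : ∀ θ, DGammaU K u (phi n) θ * phi m θ =
      C⁻¹ * ∫ t in (0:ℝ)..(2*π),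
        ((A - phi n t) * Real.exp (-(u t))) * (K (θ - t) * phi m θ) := by
    intro θ
    have hre : (fun t => ((A - phi n t) * Real.exp (-(u t))) * (K (θ - t) * phi m θ)) =
        (fun t => (A * (K (θ - t) * Real.exp (-(u t))) -
          K (θ - t) * phi n t * Real.exp (-(u t))) * phi m θ) := by
      funext t; ring
    rw [hre, intervalIntegral.integral_mul_const,
      intervalIntegral.integral_sub ((i1 θ).const_mul A) (i2 θ),
      intervalIntegral.integral_const_mul]
    unfold DGammaU
    rw [← hA]
    unfold mAvg
    rw [← hC]
    ring
  -- Fubini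
  have hFint : Integrable (Function.uncurry fun θ t =>
      ((A - phi n t) * Real.exp (-(u t))) * (K (θ - t) * phi m θ)) (ν.prod ν) := by
    have hFm : Measurable (Function.uncurry fun θ t =>
        ((A - phi n t) * Real.exp (-(u t))) * (K (θ - t) * phi m θ)) := by
      show Measurable fun p : ℝ × ℝ =>
        ((A - phi n p.2) * Real.exp (-(u p.2))) * (K (p.1 - p.2) * phi m p.1)
      exact ((measurable_const.sub ((hphic n).measurable.comp measurable_snd)).mul
        (hemeas.comp measurable_snd)).mul
        ((hKc.measurable.comp (measurable_fst.sub measurable_snd)).mul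
          ((hphic m).measurable.comp measurable_fst))
    apply (integrable_const ((|A| + P) * Real.exp M * (B * P))).mono'
      hFm.aestronglyMeasurable
    apply ae_of_all
    rintro ⟨θ, t⟩
    show ‖((A - phi n t) * Real.exp (-(u t))) * (K (θ - t) * phi m θ)‖ ≤ _
    rw [Real.norm_eq_abs, abs_mul, abs_mul, abs_mul]
    have hAP : 0 ≤ |A| + P := by linarith [abs_nonneg A]
    have h1 : |A - phi n t| ≤ |A| + P := (abs_sub _ _).trans (by linarith [hphibd n t])
    exact mul_le_mul (mul_le_mul h1 (heabs _) (abs_nonneg _) hAP)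
      (mul_le_mul (hKb _) (hphibd m _) (abs_nonneg _) hB0)
      (mul_nonneg (abs_nonneg _) (abs_nonneg _)) (by positivity)
  have hswap : (∫ θ in (0:ℝ)..(2*π), ∫ t in (0:ℝ)..(2*π),
        ((A - phi n t) * Real.exp (-(u t))) * (K (θ - t) * phi m θ)) =
      ∫ t in (0:ℝ)..(2*π), ∫ θ in (0:ℝ)..(2*π),
        ((A - phi n t) * Real.exp (-(u t))) * (K (θ - t) * phi m θ) := by
    simp_rw [intervalIntegral.integral_of_le h02]
    exact MeasureTheory.integral_integral_swap hFint
  -- inner integral evaluation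
  have hinner2 : ∀ t, (∫ θ in (0:ℝ)..(2*π),
      ((A - phi n t) * Real.exp (-(u t))) * (K (θ - t) * phi m θ)) =
      ((A - phi n t) * Real.exp (-(u t))) * (Real.sqrt π * k m * Real.cos (2*(m:ℝ)*t)) := by
    intro t
    rw [intervalIntegral.integral_const_mul]
    congr 1
    have hre : (fun θ => K (θ - t) * phi m θ) =
        (fun θ => (1/Real.sqrt π) * (K (θ - t) * Real.cos (2*(m:ℝ)*θ))) := by
      funext θ; unfold phi; rw [← hP]; ring
    rw [hre, intervalIntegral.integral_const_mul, key_int hsum hK m hm t]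
    have hss : (1/Real.sqrt π) * π = Real.sqrt π := by
      rw [one_div, inv_mul_eq_div, eq_comm, eq_div_iff hsq, Real.mul_self_sqrt Real.pi_pos.le]
    rw [show (1/Real.sqrt π) * (π * k m * Real.cos (2*(m:ℝ)*t)) =
      ((1/Real.sqrt π) * π) * (k m * Real.cos (2*(m:ℝ)*t)) from by ring, hss]
    ring
  -- the equality
  have heq : (∫ θ in (0:ℝ)..(2 * π), DGammaU K u (phi n) θ * phi m θ) =
      k m * ((C⁻¹ * In) * (C⁻¹ * Im) - C⁻¹ * Inm) := by
    calc (∫ θ in (0:ℝ)..(2 * π), DGammaU K u (phi n) θ * phi m θ)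
        = ∫ θ in (0:ℝ)..(2*π), C⁻¹ * ∫ t in (0:ℝ)..(2*π),
            ((A - phi n t) * Real.exp (-(u t))) * (K (θ - t) * phi m θ) :=
          intervalIntegral.integral_congr (fun θ _ => hinner θ)
      _ = C⁻¹ * ∫ θ in (0:ℝ)..(2*π), ∫ t in (0:ℝ)..(2*π),
            ((A - phi n t) * Real.exp (-(u t))) * (K (θ - t) * phi m θ) :=
          intervalIntegral.integral_const_mul _ _
      _ = C⁻¹ * ∫ t in (0:ℝ)..(2*π), ∫ θ in (0:ℝ)..(2*π),
            ((A - phi n t) * Real.exp (-(u t))) * (K (θ - t) * phi m θ) := by rw [hswap]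
      _ = C⁻¹ * ∫ t in (0:ℝ)..(2*π),
            ((A - phi n t) * Real.exp (-(u t))) * (Real.sqrt π * k m * Real.cos (2*(m:ℝ)*t)) :=
          congrArg _ (intervalIntegral.integral_congr (fun t _ => hinner2 t))
      _ = C⁻¹ * ∫ t in (0:ℝ)..(2*π), (Real.sqrt π * k m) *
            (A * (Real.cos (2*(m:ℝ)*t) * Real.exp (-(u t))) -
             (1/Real.sqrt π) * (Real.cos (2*(n:ℝ)*t) * Real.cos (2*(m:ℝ)*t) * Real.exp (-(u t)))) := by
          congr 1
          apply intervalIntegral.integral_congr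
          intro t _
          unfold phi
          rw [← hP]
          dsimp only
          ring
      _ = C⁻¹ * ((Real.sqrt π * k m) *
            (A * Im - (1/Real.sqrt π) * Inm)) := by
          rw [intervalIntegral.integral_const_mul, intervalIntegral.integral_sub, intervalIntegral.integral_const_mul, intervalIntegral.integral_const_mul, ← hIm, ← hInm]
          · apply IntervalIntegrable.const_mul
            apply intervalIntegrable_of_bdd (by fun_prop) (B := Real.exp M)
            intro t
            rw [abs_mul]
            calc |Real.cos (2*(m:ℝ)*t)| * |Real.exp (-(u t))| ≤ 1 * Real.exp M :=
                  mul_le_mul (Real.abs_cos_le_one _) (heabs t) (abs_nonneg _) zero_le_one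
              _ = Real.exp M := one_mul _
          · apply IntervalIntegrable.const_mul
            apply intervalIntegrable_of_bdd (by fun_prop) (B := Real.exp M)
            intro t
            rw [abs_mul, abs_mul]
            calc |Real.cos (2*(n:ℝ)*t)| * |Real.cos (2*(m:ℝ)*t)| * |Real.exp (-(u t))|
                ≤ 1 * 1 * Real.exp M := by
                  apply mul_le_mul (mul_le_mul (Real.abs_cos_le_one _) (Real.abs_cos_le_one _)
                    (abs_nonneg _) zero_le_one) (heabs t) (abs_nonneg _) (by norm_num)
              _ = Real.exp M := by ring
      _ = k m * ((C⁻¹ * In) * (C⁻¹ * Im) - C⁻¹ * Inm) := by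
          rw [hAval]
          field_simp
  -- the bound
  have hcov : |(C⁻¹ * In) * (C⁻¹ * Im) - C⁻¹ * Inm| ≤ 1 := by
    have hCν : 0 < ∫ t, Real.exp (-(u t)) ∂ν := by
      rw [hν, ← intervalIntegral.integral_of_le h02, ← hC]; exact hCpos
    have := cov_bound ν hemeas
      (X := fun t => Real.cos (2*(n:ℝ)*t)) (by fun_prop)
      (Y := fun t => Real.cos (2*(m:ℝ)*t)) (by fun_prop)
      hepos hebd (fun t => Real.abs_cos_le_one _) (fun t => Real.abs_cos_le_one _) hCν
    rw [hC, hIn, hIm, hInm]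
    simp_rw [intervalIntegral.integral_of_le h02]
    exact this
  have hmAvg_n : mAvg u (fun t => Real.cos (2 * n * t)) = C⁻¹ * In := by
    unfold mAvg; rw [← hC, hIn]
  have hmAvg_m : mAvg u (fun t => Real.cos (2 * m * t)) = C⁻¹ * Im := by
    unfold mAvg; rw [← hC, hIm]
  have hmAvg_nm : mAvg u (fun t => Real.cos (2 * n * t) * Real.cos (2 * m * t)) = C⁻¹ * Inm := by
    unfold mAvg; rw [← hC, hInm]
  refine ⟨by rw [heq, hmAvg_n, hmAvg_m, hmAvg_nm], ?_⟩
  rw [heq, abs_mul]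
  calc |k m| * |(C⁻¹ * In) * (C⁻¹ * Im) - C⁻¹ * Inm| ≤ |k m| * 1 :=
        mul_le_mul_of_nonneg_left hcov (abs_nonneg _)
    _ = |k m| := mul_one _
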